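/- Suppose L is a Lie algebra over 𝕂 that is finitely generated as a 𝕂-module, and 𝔽 is a flat unital commutative associative 𝕂-algebra. Then the canonical map Z(L)_𝔽 → L_𝔽 (induced by inclusion, where X_𝔽 = 𝔽 ⊗_𝕂 X) is injective with image Z(L_𝔽), giving an isomorphism of 𝔽-Lie algebras Z(L)_𝔽 ≅ Z(L_𝔽); and the canonical map L_𝔽 → (L/Z(L))_𝔽 induces an isomorphism of 𝔽-Lie algebras L_𝔽/Z(L_𝔽) ≅ (L/Z(L))_𝔽. -/
import Mathlib


open scoped TensorProduct

/-- Let `L` be a Lie algebra over `K` that is finitely generated as a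
`K`-module and let `F` be a flat commutative `K`-algebra.  Then the canonical map
`Z(L)_F → L_F` is injective with image `Z(L_F)` (so `Z(L)_F ≅ Z(L_F)`), and the canonical
map `L_F → (L/Z(L))_F` is a surjective Lie algebra map with kernel `Z(L_F)`, inducing an
isomorphism of `F`-Lie algebras `L_F / Z(L_F) ≅ (L/Z(L))_F`. -/
private lemma statement9_aux {K : Type*} [CommRing K] {L : Type*} [LieRing L]
    [LieAlgebra K L] (F : Type*) [CommRing F] [Algebra K F]
    (x y : F ⊗[K] L) :
    (LinearMap.baseChange F
      (LieSubmodule.Quotient.mk' (LieAlgebra.center K L)).toLinearMap) ⁅x, y⁆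
    = ⁅(LinearMap.baseChange F
          (LieSubmodule.Quotient.mk' (LieAlgebra.center K L)).toLinearMap) x,
        (LinearMap.baseChange F
          (LieSubmodule.Quotient.mk' (LieAlgebra.center K L)).toLinearMap) y⁆ := by
  set q := (LieSubmodule.Quotient.mk' (LieAlgebra.center K L)).toLinearMap with hq
  have hadd : ∀ u v w : F ⊗[K] (L ⧸ LieAlgebra.center K L),
      ⁅u + v, w⁆ = ⁅u, w⁆ + ⁅v, w⁆ := fun u v w => add_lie u v w
  have hadd' : ∀ u v w : F ⊗[K] (L ⧸ LieAlgebra.center K L),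
      ⁅u, v + w⁆ = ⁅u, v⁆ + ⁅u, w⁆ := fun u v w => lie_add u v w
  have hz : ∀ u : F ⊗[K] (L ⧸ LieAlgebra.center K L), ⁅(0 : F ⊗[K] (L ⧸ LieAlgebra.center K L)), u⁆ = 0 :=
    fun u => zero_lie u
  have hz' : ∀ u : F ⊗[K] (L ⧸ LieAlgebra.center K L), ⁅u, (0 : F ⊗[K] (L ⧸ LieAlgebra.center K L))⁆ = 0 :=
    fun u => lie_zero u
  induction x using TensorProduct.induction_on with
  | zero =>
    rw [zero_lie, map_zero]; exact (hz _).symm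
  | tmul f a =>
    induction y using TensorProduct.induction_on with
    | zero =>
      rw [lie_zero, map_zero]; exact (hz' _).symm
    | tmul g b =>
      rw [LieAlgebra.ExtendScalars.bracket_tmul, LinearMap.baseChange_tmul,
        LinearMap.baseChange_tmul, LinearMap.baseChange_tmul,
        LieAlgebra.ExtendScalars.bracket_tmul]
      have hc : ∀ z : L, q z = LieSubmodule.Quotient.mk (N := LieAlgebra.center K L) z :=
        fun _ => rfl
      rw [hc, hc, hc, ← LieSubmodule.Quotient.mk_bracket]
    | add y z g1 g2 =>
      rw [lie_add, map_add, g1, g2, map_add]; exact (hadd' _ _ _).symm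
  | add x z g1 g2 =>
    rw [add_lie, map_add, g1, g2, map_add]; exact (hadd _ _ _).symm

theorem statement9 {K : Type*} [CommRing K] {L : Type*} [LieRing L] [LieAlgebra K L]
    [Module.Finite K L] (F : Type*) [CommRing F] [Algebra K F] [Module.Flat K F] :
    -- the canonical map Z(L)_F → L_F is injective ...
    Function.Injective
      (LinearMap.baseChange F ((LieAlgebra.center K L).toSubmodule.subtype)) ∧
    -- ... with image the center of L_F, so Z(L)_F ≅ Z(L_F)
    LinearMap.range
        (LinearMap.baseChange F ((LieAlgebra.center K L).toSubmodule.subtype))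
      = (LieAlgebra.center F (F ⊗[K] L)).toSubmodule ∧
    -- the canonical map L_F → (L/Z(L))_F is surjective, ...
    Function.Surjective
      (LinearMap.baseChange F
        (LieSubmodule.Quotient.mk' (LieAlgebra.center K L)).toLinearMap) ∧
    -- ... has kernel Z(L_F), ...
    LinearMap.ker
        (LinearMap.baseChange F
          (LieSubmodule.Quotient.mk' (LieAlgebra.center K L)).toLinearMap)
      = (LieAlgebra.center F (F ⊗[K] L)).toSubmodule ∧
    -- ... and is a morphism of F-Lie algebras, hence induces an isomorphism of
    -- F-Lie algebras L_F / Z(L_F) ≅ (L / Z(L))_F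
    (∀ x y : F ⊗[K] L,
      (LinearMap.baseChange F
        (LieSubmodule.Quotient.mk' (LieAlgebra.center K L)).toLinearMap) ⁅x, y⁆
      = ⁅(LinearMap.baseChange F
            (LieSubmodule.Quotient.mk' (LieAlgebra.center K L)).toLinearMap) x,
          (LinearMap.baseChange F
            (LieSubmodule.Quotient.mk' (LieAlgebra.center K L)).toLinearMap) y⁆) := by
  classical
  obtain ⟨s, hs⟩ : (⊤ : Submodule K L).FG := Module.Finite.fg_top
  -- the key bracket identity
  have key : ∀ (x : L) (m : F ⊗[K] L),
      (LinearMap.baseChange F (LieModule.toEnd K L L x)) m = ⁅(1:F) ⊗ₜ[K] x, m⁆ := by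
    intro x m
    rw [← LieModule.toEnd_baseChange]
    rfl
  -- the finite test map
  set φ : L →ₗ[K] (s → L) :=
    LinearMap.pi (fun i : s => LieModule.toEnd K L L (i : L)) with hφdef
  have hkerφ : LinearMap.ker φ = (LieAlgebra.center K L).toSubmodule := by
    ext m
    simp only [LinearMap.mem_ker, hφdef, funext_iff, LinearMap.pi_apply,
      LieModule.toEnd_apply_apply, Pi.zero_apply, LieSubmodule.mem_toSubmodule]
    rw [show (m ∈ LieAlgebra.center K L ↔ ∀ x : L, ⁅x, m⁆ = 0) from
      LieModule.mem_maxTrivSubmodule K L L m]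
    constructor
    · intro h x
      have hx : x ∈ (⊤ : Submodule K L) := trivial
      rw [← hs] at hx
      induction hx using Submodule.span_induction with
      | mem y hy => exact h ⟨y, hy⟩
      | zero => simp
      | add y z _ _ h1 h2 => rw [add_lie, h1, h2, add_zero]
      | smul k y _ h1 => rw [smul_lie, h1, smul_zero]
    · intro h i; exact h (i : L)
  -- piRightHom identity
  have hpi : ∀ m : F ⊗[K] L,
      TensorProduct.piRightHom K F F (fun _ : s => L) (LinearMap.baseChange F φ m)
        = fun i : s => LinearMap.baseChange F (LieModule.toEnd K L L (i : L)) m := by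
    intro m
    induction m using TensorProduct.induction_on with
    | zero => funext i; simp
    | tmul f a =>
      funext i
      simp [hφdef, TensorProduct.piRightHom_tmul]
    | add x y hx hy =>
      funext i
      simp only [map_add, hx, hy, Pi.add_apply]
  have hpiInj : Function.Injective
      (TensorProduct.piRightHom K F F (fun _ : s => L)) := by
    intro a b hab
    apply (TensorProduct.piRight K F F (fun _ : s => L)).injective
    rw [TensorProduct.piRight_apply, TensorProduct.piRight_apply]
    exact hab
  -- membership in ker (baseChange φ) iff central
  have hkerBC : LinearMap.ker (LinearMap.baseChange F φ)
      = (LieAlgebra.center F (F ⊗[K] L)).toSubmodule := by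
    ext m
    simp only [LinearMap.mem_ker, LieSubmodule.mem_toSubmodule]
    rw [show (m ∈ LieAlgebra.center F (F ⊗[K] L) ↔ ∀ x : F ⊗[K] L, ⁅x, m⁆ = 0) from
      LieModule.mem_maxTrivSubmodule F (F ⊗[K] L) (F ⊗[K] L) m]
    constructor
    · intro h x
      have hi : ∀ i : s, ⁅(1:F) ⊗ₜ[K] (i : L), m⁆ = 0 := by
        intro i
        rw [← key]
        have := congrFun (by rw [h, map_zero] : TensorProduct.piRightHom K F F
          (fun _ : s => L) (LinearMap.baseChange F φ m) = 0) i
        rw [hpi m] at this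
        simpa using this
      have h1 : ∀ a : L, ⁅(1:F) ⊗ₜ[K] a, m⁆ = 0 := by
        intro a
        have ha : a ∈ (⊤ : Submodule K L) := trivial
        rw [← hs] at ha
        induction ha using Submodule.span_induction with
        | mem y hy => exact hi ⟨y, hy⟩
        | zero => simp
        | add y z _ _ g1 g2 =>
          rw [TensorProduct.tmul_add, add_lie, g1, g2, add_zero]
        | smul k y _ g1 =>
          rw [TensorProduct.tmul_smul, ← algebraMap_smul F k ((1:F) ⊗ₜ[K] y),
            smul_lie, g1, smul_zero]
      induction x using TensorProduct.induction_on with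
      | zero => simp
      | tmul f a =>
        have : f ⊗ₜ[K] a = f • ((1:F) ⊗ₜ[K] a) := by simp [TensorProduct.smul_tmul']
        rw [this, smul_lie, h1 a, smul_zero]
      | add x y g1 g2 => rw [add_lie, g1, g2, add_zero]
    · intro h
      apply hpiInj
      rw [hpi m, map_zero]
      funext i
      rw [key]
      exact h _
  -- flatness: ker of baseChange = range of baseChange of subtype inclusion
  have hflat : LinearMap.ker (LinearMap.baseChange F φ)
      = LinearMap.range (LinearMap.baseChange F
          ((LieAlgebra.center K L).toSubmodule.subtype)) := by
    have h := Module.Flat.ker_lTensor_eq F F φ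
    rw [hkerφ] at h
    exact h
  have hrange : LinearMap.range
      (LinearMap.baseChange F ((LieAlgebra.center K L).toSubmodule.subtype))
      = (LieAlgebra.center F (F ⊗[K] L)).toSubmodule := by
    rw [← hflat, hkerBC]
  -- the quotient map
  set q := (LieSubmodule.Quotient.mk' (LieAlgebra.center K L)).toLinearMap with hq
  have hkq : LinearMap.ker q = (LieAlgebra.center K L).toSubmodule := by
    ext m
    simp [hq, LieSubmodule.Quotient.mk_eq_zero]
  refine ⟨?_, hrange, ?_, ?_, ?_⟩
  · -- injectivity
    have : Function.Injective (LinearMap.lTensor F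
        ((LieAlgebra.center K L).toSubmodule.subtype)) :=
      Module.Flat.lTensor_preserves_injective_linearMap _
        (Submodule.injective_subtype _)
    exact this
  · -- surjectivity
    have hsurj : Function.Surjective q := LieSubmodule.Quotient.surjective_mk' _
    exact LinearMap.lTensor_surjective F hsurj
  · -- kernel
    have h := Module.Flat.ker_lTensor_eq F F q
    rw [hkq] at h
    rw [show LinearMap.ker (LinearMap.baseChange F q)
        = LinearMap.range (LinearMap.baseChange F
            ((LieAlgebra.center K L).toSubmodule.subtype)) from h, hrange]
  · -- Lie morphism
    exact fun x y => statement9_aux F x y
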